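/- arXiv:2209.09826 — 5 statements merged into one kernel-verified Lean document; each statement's English description precedes it below -/
import Mathlib

section
/- For all real numbers x, y > 0 with x + y ≤ 1, it holds that 1 - (x - y)^2 / max{x, y} ≤ (√(x·y) + √((1-x)·(1-y)))^2 ≤ 1 - (x - y)^2. -/
private lemma lower_aux (x y : ℝ) (hy : 0 < y) (hyx : y ≤ x) (hxy : x + y ≤ 1)
    (a b : ℝ) (ha : 0 ≤ a) (hb : 0 ≤ b) (ha2 : a ^ 2 = x * y)
    (hb2 : b ^ 2 = (1 - x) * (1 - y)) :
    1 - (x - y) ^ 2 / x ≤ (a + b) ^ 2 := by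
  have hx : 0 < x := lt_of_lt_of_le hy hyx
  have hab : y * (3 * x - 2 * x ^ 2 - y) ≤ 2 * x * (a * b) := by
    rcases le_or_gt (y * (3 * x - 2 * x ^ 2 - y)) 0 with h | h
    · exact h.trans (by positivity)
    · have hsq : (y * (3 * x - 2 * x ^ 2 - y)) ^ 2 ≤ (2 * x * (a * b)) ^ 2 := by
        have e : (2 * x * (a * b)) ^ 2 = 4 * x ^ 2 * (x * y) * ((1 - x) * (1 - y)) := by
          rw [mul_pow, mul_pow, ← ha2, ← hb2]; ring
        rw [e]
        have h4 : 0 ≤ 4 * x * (1 - x) - y := by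
          rcases le_or_gt (1/4 : ℝ) x with hc | hc
          · nlinarith [mul_nonneg hx.le (by linarith : (0:ℝ) ≤ 1 - x - y),
              mul_nonneg hy.le (by linarith : (0:ℝ) ≤ 4 * x - 1)]
          · nlinarith [mul_nonneg hx.le (by linarith : (0:ℝ) ≤ 1 - 4 * x)]
        have hfac : 4 * x ^ 2 * (x * y) * ((1 - x) * (1 - y))
            - (y * (3 * x - 2 * x ^ 2 - y)) ^ 2
            = y * ((x - y) ^ 2 * (4 * x * (1 - x) - y)) := by ring
        nlinarith [mul_nonneg hy.le (mul_nonneg (sq_nonneg (x - y)) h4), hfac]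
      have h2 : 0 ≤ 2 * x * (a * b) := by positivity
      nlinarith [hsq, h, h2]
  have h1 : (1 - (a + b) ^ 2) * x ≤ (x - y) ^ 2 := by nlinarith [hab, ha2, hb2]
  have h2 : 1 - (a + b) ^ 2 ≤ (x - y) ^ 2 / x := (le_div_iff₀ hx).2 h1
  linarith

/-- Lemma A.1: two-sided estimate for the single-mode fidelity expression. -/
theorem fidelity_two_sided_bound (x y : ℝ) (hx : 0 < x) (hy : 0 < y) (hxy : x + y ≤ 1) :
    1 - (x - y) ^ 2 / max x y
      ≤ (Real.sqrt (x * y) + Real.sqrt ((1 - x) * (1 - y))) ^ 2 ∧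
    (Real.sqrt (x * y) + Real.sqrt ((1 - x) * (1 - y))) ^ 2
      ≤ 1 - (x - y) ^ 2 := by
  have hx1 : x ≤ 1 := by linarith
  have hy1 : y ≤ 1 := by linarith
  set a := Real.sqrt (x * y) with hadef
  set b := Real.sqrt ((1 - x) * (1 - y)) with hbdef
  have ha : 0 ≤ a := Real.sqrt_nonneg _
  have hb : 0 ≤ b := Real.sqrt_nonneg _
  have ha2 : a ^ 2 = x * y := Real.sq_sqrt (by positivity)
  have hb2 : b ^ 2 = (1 - x) * (1 - y) := Real.sq_sqrt (by nlinarith)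
  constructor
  · rcases le_total y x with h | h
    · rw [max_eq_left h]
      exact lower_aux x y hy h hxy a b ha hb ha2 hb2
    · rw [max_eq_right h]
      have := lower_aux y x hx h (by linarith) a b ha hb (by rw [ha2]; ring)
        (by rw [hb2]; ring)
      calc 1 - (x - y) ^ 2 / y = 1 - (y - x) ^ 2 / y := by ring_nf
        _ ≤ (a + b) ^ 2 := this
  · -- upper bound: 2ab ≤ x(1-x) + y(1-y)
    have key : 2 * (a * b) ≤ x * (1 - x) + y * (1 - y) := by
      have hsq : (2 * (a * b)) ^ 2 ≤ (x * (1 - x) + y * (1 - y)) ^ 2 := by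
        have e : (2 * (a * b)) ^ 2 = 4 * (x * y) * ((1 - x) * (1 - y)) := by
          rw [mul_pow, mul_pow, ← ha2, ← hb2]; ring
        rw [e]
        nlinarith [sq_nonneg (x * (1 - x) - y * (1 - y))]
      have hpos : 0 ≤ x * (1 - x) + y * (1 - y) := by nlinarith
      nlinarith [hsq, hpos, mul_nonneg ha hb]
    nlinarith [key, ha2, hb2]
end

section
/- Let L be a natural number, let ν be a real number with ν > 0, and let λ : Fin L → ℝ satisfy 0 ≤ λ j and λ j + ν ≤ 1 for all j. Then ∏_{j} (√(ν·λ j) + √((1-ν)·(1-λ j)))^2 ≥ 1 - (1/ν)·∑_{j} (λ j - ν)^2. -/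
open Real Finset

lemma weier {ι : Type*} (s : Finset ι) (a : ι → ℝ) (h0 : ∀ i ∈ s, 0 ≤ a i)
    (h1 : ∀ i ∈ s, a i ≤ 1) :
    1 - ∑ i ∈ s, (1 - a i) ≤ ∏ i ∈ s, a i := by
  induction s using Finset.cons_induction with
  | empty => simp
  | cons i s hi ih =>
    rw [Finset.sum_cons, Finset.prod_cons]
    have h0i := h0 i (Finset.mem_cons_self i s)
    have h1i := h1 i (Finset.mem_cons_self i s)
    have ih' := ih (fun j hj => h0 j (Finset.mem_cons_of_mem hj))
      (fun j hj => h1 j (Finset.mem_cons_of_mem hj))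
    have hS : 0 ≤ ∑ j ∈ s, (1 - a j) :=
      Finset.sum_nonneg fun j hj => by linarith [h1 j (Finset.mem_cons_of_mem hj)]
    nlinarith [mul_le_mul_of_nonneg_left ih' h0i]

lemma contra_arith (ν l : ℝ) (hν : 0 < ν) (h1 : l + ν ≤ 1)
    (hlpos : 0 < l) (hνhalf : 1 - 2 * ν < 0)
    (e1 : 4 * (l * (1 - ν) * (ν * (1 - l))) < (l * (1 - 2 * ν)) ^ 2) : False := by
  have hν1' : 0 < 1 - ν := by linarith
  have e2' : l * (4 * ((1 - ν) * (ν * (1 - l)))) < l * (l * (1 - 2 * ν) ^ 2) := by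
    nlinarith [e1]
  have e2 : 4 * ((1 - ν) * (ν * (1 - l))) < l * (1 - 2 * ν) ^ 2 :=
    lt_of_mul_lt_mul_left e2' hlpos.le
  have e3 : l * (1 - 2 * ν) ^ 2 ≤ (1 - ν) * (1 - 2 * ν) ^ 2 :=
    mul_le_mul_of_nonneg_right (by linarith) (sq_nonneg _)
  have e4 : 4 * ((1 - ν) * (ν * ν)) ≤ 4 * ((1 - ν) * (ν * (1 - l))) := by
    nlinarith [mul_nonneg (mul_nonneg hν1'.le hν.le) (show (0:ℝ) ≤ 1 - l - ν by linarith)]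
  have e5' : (1 - ν) * (4 * (ν * ν)) < (1 - ν) * ((1 - 2 * ν) ^ 2) := by
    nlinarith [e2, e3, e4]
  have e5 : 4 * (ν * ν) < (1 - 2 * ν) ^ 2 :=
    lt_of_mul_lt_mul_left e5' hν1'.le
  nlinarith [e5]

lemma per_term (ν l : ℝ) (hν : 0 < ν) (h0 : 0 ≤ l) (h1 : l + ν ≤ 1) :
    1 - (Real.sqrt (ν * l) + Real.sqrt ((1 - ν) * (1 - l))) ^ 2 ≤ (l - ν) ^ 2 / ν := by
  have hl1 : 0 ≤ 1 - l := by linarith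
  have hν1 : 0 ≤ 1 - ν := by linarith
  set s := Real.sqrt (ν * l) with hs
  set t := Real.sqrt ((1 - ν) * (1 - l)) with ht
  set u := Real.sqrt (l * (1 - ν)) with hu
  set v := Real.sqrt (ν * (1 - l)) with hv
  have hs0 : 0 ≤ s := Real.sqrt_nonneg _
  have ht0 : 0 ≤ t := Real.sqrt_nonneg _
  have hu0 : 0 ≤ u := Real.sqrt_nonneg _
  have hv0 : 0 ≤ v := Real.sqrt_nonneg _
  have hs2 : s ^ 2 = ν * l := Real.sq_sqrt (mul_nonneg hν.le h0)
  have ht2 : t ^ 2 = (1 - ν) * (1 - l) := Real.sq_sqrt (mul_nonneg hν1 hl1)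
  have hu2 : u ^ 2 = l * (1 - ν) := Real.sq_sqrt (mul_nonneg h0 hν1)
  have hv2 : v ^ 2 = ν * (1 - l) := Real.sq_sqrt (mul_nonneg hν.le hl1)
  have hstuv : s * t = u * v := by
    rw [hs, ht, hu, hv, ← Real.sqrt_mul (mul_nonneg hν.le h0),
      ← Real.sqrt_mul (mul_nonneg h0 hν1)]
    ring_nf
  have key : 1 - (s + t) ^ 2 = (u - v) ^ 2 := by nlinarith [hs2, ht2, hu2, hv2, hstuv]
  rw [key, le_div_iff₀ hν, mul_comm]
  have hlv : l - ν = u ^ 2 - v ^ 2 := by rw [hu2, hv2]; ring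
  rw [hlv]
  rcases le_or_gt ν ((u + v) ^ 2) with hA | hB
  · nlinarith [mul_le_mul_of_nonneg_right hA (sq_nonneg (u - v))]
  · exfalso
    clear_value s t
    clear hs ht hs0 ht0 hs2 ht2 hstuv key
    have huv0 : 0 ≤ u * v := mul_nonneg hu0 hv0
    have hBe : u ^ 2 + 2 * (u * v) + v ^ 2 < ν := by nlinarith [hB]
    have hd : l * (1 - 2 * ν) + 2 * (u * v) < 0 := by nlinarith [hBe, hu2, hv2]
    have hlpos : 0 < l := by nlinarith
    have hνhalf : 1 - 2 * ν < 0 := by nlinarith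
    have hν1' : 0 < 1 - ν := by linarith
    have hsq : (2 * (u * v)) ^ 2 < (l * (1 - 2 * ν)) ^ 2 := by nlinarith
    have huv2 : (u * v) ^ 2 = l * (1 - ν) * (ν * (1 - l)) := by
      rw [mul_pow, hu2, hv2]
    have e1 : 4 * (l * (1 - ν) * (ν * (1 - l))) < (l * (1 - 2 * ν)) ^ 2 := by
      nlinarith [hsq, huv2]
    exact contra_arith ν l hν h1 hlpos hνhalf e1

lemma per_le_one (ν l : ℝ) (hν : 0 < ν) (h0 : 0 ≤ l) (h1 : l + ν ≤ 1) :
    (Real.sqrt (ν * l) + Real.sqrt ((1 - ν) * (1 - l))) ^ 2 ≤ 1 := by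
  have hl1 : 0 ≤ 1 - l := by linarith
  have hν1 : 0 ≤ 1 - ν := by linarith
  set s := Real.sqrt (ν * l) with hs
  set t := Real.sqrt ((1 - ν) * (1 - l)) with ht
  set u := Real.sqrt (l * (1 - ν)) with hu
  set v := Real.sqrt (ν * (1 - l)) with hv
  have hs2 : s ^ 2 = ν * l := Real.sq_sqrt (mul_nonneg hν.le h0)
  have ht2 : t ^ 2 = (1 - ν) * (1 - l) := Real.sq_sqrt (mul_nonneg hν1 hl1)
  have hu2 : u ^ 2 = l * (1 - ν) := Real.sq_sqrt (mul_nonneg h0 hν1)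
  have hv2 : v ^ 2 = ν * (1 - l) := Real.sq_sqrt (mul_nonneg hν.le hl1)
  have hstuv : s * t = u * v := by
    rw [hs, ht, hu, hv, ← Real.sqrt_mul (mul_nonneg hν.le h0),
      ← Real.sqrt_mul (mul_nonneg h0 hν1)]
    ring_nf
  nlinarith [sq_nonneg (u - v), hs2, ht2, hu2, hv2, hstuv]

/-- Deterministic core of eigenstate thermalization: F ≥ 1 - M/ν. -/
theorem fidelity_lower_bound (L : ℕ) (ν : ℝ) (hν : 0 < ν) (lam : Fin L → ℝ)
    (hlam0 : ∀ j, 0 ≤ lam j) (hlam1 : ∀ j, lam j + ν ≤ 1) :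
    ∏ j, (Real.sqrt (ν * lam j) + Real.sqrt ((1 - ν) * (1 - lam j))) ^ 2
      ≥ 1 - (1 / ν) * ∑ j, (lam j - ν) ^ 2 := by
  have hw := weier Finset.univ
    (fun j => (Real.sqrt (ν * lam j) + Real.sqrt ((1 - ν) * (1 - lam j))) ^ 2)
    (fun j _ => sq_nonneg _)
    (fun j _ => per_le_one ν (lam j) hν (hlam0 j) (hlam1 j))
  have hsum : ∑ j, (1 - (Real.sqrt (ν * lam j) + Real.sqrt ((1 - ν) * (1 - lam j))) ^ 2)
      ≤ (1 / ν) * ∑ j, (lam j - ν) ^ 2 := by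
    rw [Finset.mul_sum]
    refine Finset.sum_le_sum fun j _ => ?_
    have := per_term ν (lam j) hν (hlam0 j) (hlam1 j)
    rw [div_eq_inv_mul, ← one_div] at this
    exact this
  exact le_trans (by linarith) hw
end

section
/- Let L be a natural number, let ν be a real number with 0 ≤ ν, and let λ : Fin L → ℝ satisfy 0 ≤ λ j and λ j + ν ≤ 1 for all j. Then ∏_{j} (√(ν·λ j) + √((1-ν)·(1-λ j)))^2 ≤ exp(-∑_{j} (λ j - ν)^2). -/
lemma fidelity_factor_bound (x y : ℝ) (hy : 0 ≤ y) (hx : 0 ≤ x) (hxy : x + y ≤ 1) :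
    (Real.sqrt (y * x) + Real.sqrt ((1 - y) * (1 - x))) ^ 2
      ≤ Real.exp (-(x - y) ^ 2) := by
  have hy1 : 0 ≤ 1 - y := by linarith
  have hx1 : 0 ≤ 1 - x := by linarith
  set s := Real.sqrt y with hs
  set t := Real.sqrt x with ht
  set u := Real.sqrt (1 - y) with hu
  set v := Real.sqrt (1 - x) with hv
  have hs2 : s ^ 2 = y := Real.sq_sqrt hy
  have ht2 : t ^ 2 = x := Real.sq_sqrt hx
  have hu2 : u ^ 2 = 1 - y := Real.sq_sqrt hy1
  have hv2 : v ^ 2 = 1 - x := Real.sq_sqrt hx1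
  have hs0 : 0 ≤ s := Real.sqrt_nonneg _
  have ht0 : 0 ≤ t := Real.sqrt_nonneg _
  have hu0 : 0 ≤ u := Real.sqrt_nonneg _
  have hv0 : 0 ≤ v := Real.sqrt_nonneg _
  have h1 : Real.sqrt (y * x) = s * t := Real.sqrt_mul hy x
  have h2 : Real.sqrt ((1 - y) * (1 - x)) = u * v := Real.sqrt_mul hy1 (1 - x)
  rw [h1, h2]
  have key : (s * t + u * v) ^ 2 ≤ 1 - (x - y) ^ 2 := by
    rw [← hs2] at hu2
    rw [← ht2] at hv2
    rw [← hs2, ← ht2]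
    have hsv : (s * v) ^ 2 = s ^ 2 * (1 - t ^ 2) := by rw [mul_pow, hv2]
    have htu : (t * u) ^ 2 = t ^ 2 * (1 - s ^ 2) := by rw [mul_pow, hu2]
    have h3 : (s * v + t * u) ^ 2 ≤ 1 := by
      nlinarith [sq_nonneg (s * t - u * v), hsv, htu, mul_pow u v 2, hu2, hv2]
    have h7 : (s * v - t * u) ^ 2 * (s * v + t * u) ^ 2 = (t ^ 2 - s ^ 2) ^ 2 := by
      have h : (s * v - t * u) ^ 2 * (s * v + t * u) ^ 2
          = ((s * v) ^ 2 - (t * u) ^ 2) ^ 2 := by ring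
      rw [h, hsv, htu]; ring
    have h8 : 0 ≤ (1 - (s * v + t * u) ^ 2) * (s * v - t * u) ^ 2 :=
      mul_nonneg (by linarith) (sq_nonneg _)
    have h9 : (s * t + u * v) ^ 2 + (s * v - t * u) ^ 2 = 1 := by
      have h : (s * t + u * v) ^ 2 + (s * v - t * u) ^ 2
          = (s ^ 2 + u ^ 2) * (t ^ 2 + v ^ 2) := by ring
      rw [h, hu2, hv2]; ring
    nlinarith [h7, h8, h9]
  have hexp : 1 - (x - y) ^ 2 ≤ Real.exp (-(x - y) ^ 2) := by
    have := Real.add_one_le_exp (-(x - y) ^ 2)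
    linarith
  linarith

/-- Deterministic core of the failure of the ETH: F ≤ exp(-M). -/
theorem fidelity_upper_bound (L : ℕ) (ν : ℝ) (hν : 0 ≤ ν) (lam : Fin L → ℝ)
    (hlam0 : ∀ j, 0 ≤ lam j) (hlam1 : ∀ j, lam j + ν ≤ 1) :
    ∏ j, (Real.sqrt (ν * lam j) + Real.sqrt ((1 - ν) * (1 - lam j))) ^ 2
      ≤ Real.exp (-∑ j, (lam j - ν) ^ 2) := by
  have h : ∏ j, (Real.sqrt (ν * lam j) + Real.sqrt ((1 - ν) * (1 - lam j))) ^ 2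
      ≤ ∏ j, Real.exp (-(lam j - ν) ^ 2) := by
    apply Finset.prod_le_prod
    · intro j _; positivity
    · intro j _
      exact fidelity_factor_bound (lam j) ν hν (hlam0 j) (hlam1 j)
  calc _ ≤ ∏ j, Real.exp (-(lam j - ν) ^ 2) := h
    _ = Real.exp (∑ j, -(lam j - ν) ^ 2) := (Real.exp_sum _ _).symm
    _ = Real.exp (-∑ j, (lam j - ν) ^ 2) := by rw [Finset.sum_neg_distrib]
end

section
/- Let L be a natural number, ν ∈ ℝ with ν > 0, and λ : Fin L → ℝ with 0 ≤ λ j and λ j + ν ≤ 1 for all j. For s : Fin L → Bool define P_λ(s) := ∏_j (if s j = true then λ j else 1 - λ j) and P_ν(s) := ∏_j (if s j = true then ν else 1 - ν). Then (1/2) · ∑_{s : Fin L → Bool} |P_λ(s) - P_ν(s)| ≤ √( (1/ν) · ∑_j (λ j - ν)^2 ). -/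
private lemma sqrt_prod' {ι : Type*} [DecidableEq ι] (s : Finset ι) (f : ι → ℝ)
    (h : ∀ i ∈ s, 0 ≤ f i) :
    Real.sqrt (∏ i ∈ s, f i) = ∏ i ∈ s, Real.sqrt (f i) := by
  induction s using Finset.induction with
  | empty => simp
  | insert _ _ hx ih =>
    rename_i a t
    rw [Finset.prod_insert hx, Finset.prod_insert hx,
      Real.sqrt_mul (h a (Finset.mem_insert_self a t)),
      ih (fun i hi => h i (Finset.mem_insert_of_mem hi))]

private lemma weierstrass' {ι : Type*} [DecidableEq ι] (s : Finset ι) (c : ι → ℝ)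
    (h0 : ∀ i ∈ s, 0 ≤ c i) (h1 : ∀ i ∈ s, c i ≤ 1) :
    1 - ∏ i ∈ s, c i ≤ ∑ i ∈ s, (1 - c i) := by
  induction s using Finset.induction with
  | empty => simp
  | insert _ _ hx ih =>
    rename_i a t
    rw [Finset.prod_insert hx, Finset.sum_insert hx]
    have hp0 : 0 ≤ ∏ i ∈ t, c i :=
      Finset.prod_nonneg (fun i hi => h0 i (Finset.mem_insert_of_mem hi))
    have hit := ih (fun i hi => h0 i (Finset.mem_insert_of_mem hi))
      (fun i hi => h1 i (Finset.mem_insert_of_mem hi))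
    have hca := h0 a (Finset.mem_insert_self a t)
    have hca1 := h1 a (Finset.mem_insert_self a t)
    nlinarith [Finset.prod_le_one (fun i hi => h0 i (Finset.mem_insert_of_mem hi))
      (fun i hi => h1 i (Finset.mem_insert_of_mem hi))]

private lemma sum_prod_bool {L : ℕ} (f : Fin L → Bool → ℝ) :
    ∑ s : Fin L → Bool, ∏ j, f j (s j) = ∏ j, (f j true + f j false) := by
  have h := Finset.prod_univ_sum (fun _ : Fin L => (Finset.univ : Finset Bool)) f
  rw [Fintype.piFinset_univ] at h
  rw [← h]
  exact Finset.prod_congr rfl fun j _ => by simp [Fintype.sum_bool]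

private lemma index_bound {lam ν : ℝ} (hν : 0 < ν) (h0 : 0 ≤ lam) (h1 : lam + ν ≤ 1) :
    0 ≤ Real.sqrt (lam * ν) + Real.sqrt ((1 - lam) * (1 - ν)) ∧
    (Real.sqrt (lam * ν) + Real.sqrt ((1 - lam) * (1 - ν))) ^ 2 ≤ 1 ∧
    1 - (Real.sqrt (lam * ν) + Real.sqrt ((1 - lam) * (1 - ν))) ^ 2 ≤ (lam - ν) ^ 2 / ν := by
  have hν1 : ν ≤ 1 := by linarith
  have hl1 : lam ≤ 1 := by linarith
  have hx : (0:ℝ) ≤ lam * (1 - ν) := mul_nonneg h0 (by linarith)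
  have hy : (0:ℝ) ≤ ν * (1 - lam) := mul_nonneg hν.le (by linarith)
  set u := Real.sqrt (lam * (1 - ν)) with hudef
  set v := Real.sqrt (ν * (1 - lam)) with hvdef
  set s := Real.sqrt ((lam * (1 - ν)) * (ν * (1 - lam))) with hsdef
  have hu : 0 ≤ u := Real.sqrt_nonneg _
  have hv : 0 ≤ v := Real.sqrt_nonneg _
  have hs0 : 0 ≤ s := Real.sqrt_nonneg _
  have hu2 : u ^ 2 = lam * (1 - ν) := Real.sq_sqrt hx
  have hv2 : v ^ 2 = ν * (1 - lam) := Real.sq_sqrt hy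
  have huv : u * v = s := by rw [hudef, hvdef, hsdef, ← Real.sqrt_mul hx]
  have hb2 : (Real.sqrt (lam * ν) + Real.sqrt ((1 - lam) * (1 - ν))) ^ 2
      = lam * ν + (1 - lam) * (1 - ν) + 2 * s := by
    have h1' : Real.sqrt (lam * ν) ^ 2 = lam * ν := Real.sq_sqrt (mul_nonneg h0 hν.le)
    have h2' : Real.sqrt ((1 - lam) * (1 - ν)) ^ 2 = (1 - lam) * (1 - ν) :=
      Real.sq_sqrt (mul_nonneg (by linarith) (by linarith))
    have h3' : Real.sqrt (lam * ν) * Real.sqrt ((1 - lam) * (1 - ν)) = s := by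
      rw [hsdef, ← Real.sqrt_mul (mul_nonneg h0 hν.le)]
      ring_nf
    nlinarith [h1', h2', h3']
  have hsxy : lam * ν ≤ s := by
    rw [hsdef, show (lam * (1 - ν)) * (ν * (1 - lam)) = (lam * ν) * ((1 - ν) * (1 - lam)) by ring]
    rw [Real.le_sqrt (mul_nonneg h0 hν.le)
      (mul_nonneg (mul_nonneg h0 hν.le) (mul_nonneg (by linarith) (by linarith)))]
    have hm : lam * ν ≤ (1 - ν) * (1 - lam) :=
      mul_le_mul (by linarith) (by linarith) hν.le (by linarith)
    nlinarith [mul_nonneg h0 hν.le]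
  clear_value u v s
  have key : 1 - (Real.sqrt (lam * ν) + Real.sqrt ((1 - lam) * (1 - ν))) ^ 2
      = (u - v) ^ 2 := by
    have : (u - v) ^ 2 = u ^ 2 + v ^ 2 - 2 * (u * v) := by ring
    rw [hb2, this, hu2, hv2, huv]; ring
  have hsum : ν ≤ (u + v) ^ 2 := by
    have : (u + v) ^ 2 = u ^ 2 + v ^ 2 + 2 * (u * v) := by ring
    rw [this, hu2, hv2, huv]
    nlinarith
  have hnum : ν * (u - v) ^ 2 ≤ (lam - ν) ^ 2 := by
    have h1' : ν * (u - v) ^ 2 ≤ (u + v) ^ 2 * (u - v) ^ 2 :=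
      mul_le_mul_of_nonneg_right hsum (sq_nonneg _)
    have h2' : (u + v) ^ 2 * (u - v) ^ 2 = (u ^ 2 - v ^ 2) ^ 2 := by ring
    rw [h2', hu2, hv2] at h1'
    calc ν * (u - v) ^ 2 ≤ (lam * (1 - ν) - ν * (1 - lam)) ^ 2 := h1'
      _ = (lam - ν) ^ 2 := by ring
  refine ⟨by positivity, ?_, ?_⟩
  · nlinarith [sq_nonneg (u - v), key]
  · rw [key, le_div_iff₀ hν]
    linarith [hnum]

/-- Trace distance between the Bernoulli product distributions is at most
√(M/ν), where M = ∑ (λ_j - ν)². -/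
theorem tv_dist_upper_bound (L : ℕ) (ν : ℝ) (hν : 0 < ν) (lam : Fin L → ℝ)
    (hlam0 : ∀ j, 0 ≤ lam j) (hlam1 : ∀ j, lam j + ν ≤ 1) :
    (1 / 2 : ℝ) * ∑ s : Fin L → Bool,
        |(∏ j, if s j = true then lam j else 1 - lam j)
          - ∏ j, if s j = true then ν else 1 - ν|
      ≤ Real.sqrt ((1 / ν) * ∑ j, (lam j - ν) ^ 2) := by
  classical
  set pf : Fin L → Bool → ℝ := fun j b => if b = true then lam j else 1 - lam j with hpf
  set qf : Fin L → Bool → ℝ := fun j b => if b = true then ν else 1 - ν with hqf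
  set P : (Fin L → Bool) → ℝ := fun s => ∏ j, pf j (s j) with hP
  set Q : (Fin L → Bool) → ℝ := fun s => ∏ j, qf j (s j) with hQ
  have hpf0 : ∀ j b, 0 ≤ pf j b := by
    intro j b
    have := hlam0 j; have := hlam1 j
    cases b <;> simp [hpf] <;> linarith
  have hqf0 : ∀ (j : Fin L) b, 0 ≤ qf j b := by
    intro j b
    have := hlam0 j; have := hlam1 j
    cases b <;> simp [hqf] <;> linarith
  have hP0 : ∀ s, 0 ≤ P s := fun s => Finset.prod_nonneg fun j _ => hpf0 j (s j)
  have hQ0 : ∀ s, 0 ≤ Q s := fun s => Finset.prod_nonneg fun j _ => hqf0 j (s j)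
  have hPsum : ∑ s : Fin L → Bool, P s = 1 := by
    rw [hP, sum_prod_bool]
    rw [Finset.prod_congr rfl fun j _ => show pf j true + pf j false = 1 by simp [hpf]]
    simp
  have hQsum : ∑ s : Fin L → Bool, Q s = 1 := by
    rw [hQ, sum_prod_bool]
    rw [Finset.prod_congr rfl fun j _ => show qf j true + qf j false = 1 by simp [hqf]]
    simp
  set b : Fin L → ℝ := fun j =>
    Real.sqrt (lam j * ν) + Real.sqrt ((1 - lam j) * (1 - ν)) with hb
  have hbj := fun j : Fin L => index_bound hν (hlam0 j) (hlam1 j)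
  set B : ℝ := ∏ j, b j with hBdef
  have hBsum : ∑ s : Fin L → Bool, Real.sqrt (P s * Q s) = B := by
    have h1 : ∀ s : Fin L → Bool,
        Real.sqrt (P s * Q s) = ∏ j, Real.sqrt (pf j (s j) * qf j (s j)) := by
      intro s
      rw [hP, hQ, ← Finset.prod_mul_distrib]
      exact sqrt_prod' _ _ fun j _ => mul_nonneg (hpf0 j (s j)) (hqf0 j (s j))
    rw [Finset.sum_congr rfl fun s _ => h1 s,
      sum_prod_bool (fun j c => Real.sqrt (pf j c * qf j c))]
    exact Finset.prod_congr rfl fun j _ => by simp [hpf, hqf, hb]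
  have hB0 : 0 ≤ B := Finset.prod_nonneg fun j _ => (hbj j).1
  -- Cauchy–Schwarz
  have habs : ∀ s : Fin L → Bool, |P s - Q s|
      = |Real.sqrt (P s) - Real.sqrt (Q s)| * (Real.sqrt (P s) + Real.sqrt (Q s)) := by
    intro s
    have hps : Real.sqrt (P s) ^ 2 = P s := Real.sq_sqrt (hP0 s)
    have hqs : Real.sqrt (Q s) ^ 2 = Q s := Real.sq_sqrt (hQ0 s)
    have hfac : P s - Q s = (Real.sqrt (P s) - Real.sqrt (Q s))
        * (Real.sqrt (P s) + Real.sqrt (Q s)) := by nlinarith [hps, hqs]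
    rw [hfac, abs_mul,
      abs_of_nonneg (add_nonneg (Real.sqrt_nonneg _) (Real.sqrt_nonneg _))]
  have hCS : (∑ s : Fin L → Bool, |P s - Q s|) ^ 2
      ≤ (∑ s : Fin L → Bool, (Real.sqrt (P s) - Real.sqrt (Q s)) ^ 2)
        * ∑ s : Fin L → Bool, (Real.sqrt (P s) + Real.sqrt (Q s)) ^ 2 := by
    rw [Finset.sum_congr rfl fun s _ => habs s]
    have := Finset.sum_mul_sq_le_sq_mul_sq Finset.univ
      (fun s : Fin L → Bool => |Real.sqrt (P s) - Real.sqrt (Q s)|)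
      (fun s : Fin L → Bool => Real.sqrt (P s) + Real.sqrt (Q s))
    simpa [sq_abs] using this
  have hsub : ∑ s : Fin L → Bool, (Real.sqrt (P s) - Real.sqrt (Q s)) ^ 2 = 2 - 2 * B := by
    have h1 : ∀ s : Fin L → Bool, (Real.sqrt (P s) - Real.sqrt (Q s)) ^ 2
        = P s + Q s - 2 * Real.sqrt (P s * Q s) := by
      intro s
      have hps : Real.sqrt (P s) ^ 2 = P s := Real.sq_sqrt (hP0 s)
      have hqs : Real.sqrt (Q s) ^ 2 = Q s := Real.sq_sqrt (hQ0 s)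
      have hm : Real.sqrt (P s) * Real.sqrt (Q s) = Real.sqrt (P s * Q s) :=
        (Real.sqrt_mul (hP0 s) _).symm
      nlinarith [hps, hqs, hm]
    rw [Finset.sum_congr rfl fun s _ => h1 s, Finset.sum_sub_distrib,
      Finset.sum_add_distrib, hPsum, hQsum, ← Finset.mul_sum, hBsum]
    ring
  have hadd : ∑ s : Fin L → Bool, (Real.sqrt (P s) + Real.sqrt (Q s)) ^ 2 = 2 + 2 * B := by
    have h1 : ∀ s : Fin L → Bool, (Real.sqrt (P s) + Real.sqrt (Q s)) ^ 2
        = P s + Q s + 2 * Real.sqrt (P s * Q s) := by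
      intro s
      have hps : Real.sqrt (P s) ^ 2 = P s := Real.sq_sqrt (hP0 s)
      have hqs : Real.sqrt (Q s) ^ 2 = Q s := Real.sq_sqrt (hQ0 s)
      have hm : Real.sqrt (P s) * Real.sqrt (Q s) = Real.sqrt (P s * Q s) :=
        (Real.sqrt_mul (hP0 s) _).symm
      nlinarith [hps, hqs, hm]
    rw [Finset.sum_congr rfl fun s _ => h1 s, Finset.sum_add_distrib,
      Finset.sum_add_distrib, hPsum, hQsum, ← Finset.mul_sum, hBsum]
    ring
  -- bound 1 - B² by the sum
  have hB2 : B ^ 2 = ∏ j, (b j) ^ 2 := by rw [hBdef, ← Finset.prod_pow]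
  have hWB : 1 - B ^ 2 ≤ (1 / ν) * ∑ j, (lam j - ν) ^ 2 := by
    have h1 : 1 - B ^ 2 ≤ ∑ j, (1 - (b j) ^ 2) := by
      rw [hB2]
      exact weierstrass' _ _ (fun j _ => sq_nonneg _) (fun j _ => (hbj j).2.1)
    have h2 : ∑ j, (1 - (b j) ^ 2) ≤ ∑ j, (lam j - ν) ^ 2 / ν :=
      Finset.sum_le_sum fun j _ => (hbj j).2.2
    have h3 : ∑ j, (lam j - ν) ^ 2 / ν = (1 / ν) * ∑ j, (lam j - ν) ^ 2 := by
      rw [Finset.mul_sum]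
      exact Finset.sum_congr rfl fun j _ => by ring
    linarith [h1, h2, h3.le, h3.ge]
  -- combine
  have hT0 : 0 ≤ ∑ s : Fin L → Bool, |P s - Q s| :=
    Finset.sum_nonneg fun s _ => abs_nonneg _
  have hgoal2 : ((1 / 2 : ℝ) * ∑ s : Fin L → Bool, |P s - Q s|) ^ 2
      ≤ (1 / ν) * ∑ j, (lam j - ν) ^ 2 := by
    have h4 : (∑ s : Fin L → Bool, |P s - Q s|) ^ 2 ≤ (2 - 2 * B) * (2 + 2 * B) := by
      rw [← hsub, ← hadd]; exact hCS
    nlinarith [h4, hWB]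
  have hfin : (1 / 2 : ℝ) * ∑ s : Fin L → Bool, |P s - Q s|
      ≤ Real.sqrt ((1 / ν) * ∑ j, (lam j - ν) ^ 2) := by
    rw [Real.le_sqrt (by positivity)
      (by positivity : (0:ℝ) ≤ (1 / ν) * ∑ j, (lam j - ν) ^ 2)]
    exact hgoal2
  exact hfin
end

section
/- Let L be a natural number, ν ∈ ℝ with 0 ≤ ν, and λ : Fin L → ℝ with 0 ≤ λ j and λ j + ν ≤ 1 for all j. For s : Fin L → Bool define P_λ(s) := ∏_j (if s j = true then λ j else 1 - λ j) and P_ν(s) := ∏_j (if s j = true then ν else 1 - ν). Then (1/2) · ∑_{s : Fin L → Bool} |P_λ(s) - P_ν(s)| ≥ 1 - exp( -(1/2) · ∑_j (λ j - ν)^2 ). -/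
lemma aux_amhm (p q : ℝ) (hp : 0 ≤ p) (hq : 0 ≤ q) (h : p + q ≤ 4) :
    p * q ≤ p + q := by nlinarith [sq_nonneg (p - q)]

lemma alg_ineq (x y z w : ℝ) (hx0 : 0 ≤ x) (hy0 : 0 ≤ y) (hz0 : 0 ≤ z) (hw0 : 0 ≤ w)
    (hxz : x ^ 2 + z ^ 2 = 1) (hyw : y ^ 2 + w ^ 2 = 1) (hab : x ^ 2 + y ^ 2 ≤ 1) :
    x * y + z * w ≤ 1 - (x ^ 2 - y ^ 2) ^ 2 / 2 := by
  have hd2 : (z ^ 2 - w ^ 2) ^ 2 = (x ^ 2 - y ^ 2) ^ 2 := by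
    linear_combination (z ^ 2 - w ^ 2 - x ^ 2 + y ^ 2) * (hxz - hyw)
  have h4 : (x + y) ^ 2 + (z + w) ^ 2 = 4 - ((x - y) ^ 2 + (z - w) ^ 2) := by
    linear_combination 2 * hxz + 2 * hyw
  have hSsum : (x + y) ^ 2 + (z + w) ^ 2 ≤ 4 := by
    have := sq_nonneg (x - y); have := sq_nonneg (z - w); linarith
  have huv : (x ^ 2 - y ^ 2) ^ 2 ≤ (x - y) ^ 2 + (z - w) ^ 2 := by
    rcases eq_or_lt_of_le (sq_nonneg (x + y)) with hS1z | hS1p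
    · have hs : x + y = 0 := pow_eq_zero_iff two_ne_zero |>.mp hS1z.symm
      have hx' : x = 0 := by linarith
      have hy' : y = 0 := by linarith
      have h0 : (x ^ 2 - y ^ 2) ^ 2 = 0 := by rw [hx', hy']; ring
      rw [h0]; positivity
    rcases eq_or_lt_of_le (sq_nonneg (z + w)) with hS2z | hS2p
    · have hs : z + w = 0 := pow_eq_zero_iff two_ne_zero |>.mp hS2z.symm
      have hz' : z = 0 := by linarith
      have hw' : w = 0 := by linarith
      have hz2 : z ^ 2 = 0 := by rw [hz']; ring
      have hw2 : w ^ 2 = 0 := by rw [hw']; ring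
      have hx1 : x ^ 2 = 1 := by linarith
      have hy1 : y ^ 2 = 1 := by linarith
      have h0 : (x ^ 2 - y ^ 2) ^ 2 = 0 := by rw [hx1, hy1]; ring
      rw [h0]; positivity
    · have hSS : (x + y) ^ 2 * ((z + w) ^ 2) ≤ (x + y) ^ 2 + (z + w) ^ 2 :=
        aux_amhm _ _ (sq_nonneg _) (sq_nonneg _) hSsum
      have hpos : 0 < (x + y) ^ 2 * (z + w) ^ 2 := mul_pos hS1p hS2p
      have e1 : (x - y) ^ 2 * (x + y) ^ 2 = (x ^ 2 - y ^ 2) ^ 2 := by ring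
      have e2 : (z - w) ^ 2 * (z + w) ^ 2 = (x ^ 2 - y ^ 2) ^ 2 := by rw [← hd2]; ring
      have key : ((x - y) ^ 2 + (z - w) ^ 2) * ((x + y) ^ 2 * (z + w) ^ 2)
          ≥ (x ^ 2 - y ^ 2) ^ 2 * ((x + y) ^ 2 * (z + w) ^ 2) := by
        have e : ((x - y) ^ 2 + (z - w) ^ 2) * ((x + y) ^ 2 * (z + w) ^ 2)
            = ((x - y) ^ 2 * (x + y) ^ 2) * (z + w) ^ 2
              + ((z - w) ^ 2 * (z + w) ^ 2) * (x + y) ^ 2 := by ring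
        rw [e, e1, e2]
        have := mul_le_mul_of_nonneg_left hSS (sq_nonneg (x ^ 2 - y ^ 2))
        linarith
      exact le_of_mul_le_mul_right (by linarith) hpos
  have expand : (x - y) ^ 2 + (z - w) ^ 2 = 2 - 2 * (x * y) - 2 * (z * w) := by
    linear_combination hxz + hyw
  linarith [huv]

lemma factor_le (a b : ℝ) (ha : 0 ≤ a) (hb : 0 ≤ b) (hab : a + b ≤ 1) :
    Real.sqrt (a * b) + Real.sqrt ((1 - a) * (1 - b)) ≤ Real.exp (-(a - b) ^ 2 / 2) := by
  have hx : Real.sqrt a ^ 2 = a := Real.sq_sqrt ha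
  have hy : Real.sqrt b ^ 2 = b := Real.sq_sqrt hb
  have hz : Real.sqrt (1 - a) ^ 2 = 1 - a := Real.sq_sqrt (by linarith)
  have hw : Real.sqrt (1 - b) ^ 2 = 1 - b := Real.sq_sqrt (by linarith)
  have h1 : Real.sqrt (a * b) = Real.sqrt a * Real.sqrt b := Real.sqrt_mul ha b
  have h2 : Real.sqrt ((1 - a) * (1 - b)) = Real.sqrt (1 - a) * Real.sqrt (1 - b) :=
    Real.sqrt_mul (by linarith) _
  have hexp : 1 - (a - b) ^ 2 / 2 ≤ Real.exp (-(a - b) ^ 2 / 2) := by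
    have := Real.add_one_le_exp (-(a - b) ^ 2 / 2)
    linarith
  have main := alg_ineq (Real.sqrt a) (Real.sqrt b) (Real.sqrt (1 - a)) (Real.sqrt (1 - b))
    (Real.sqrt_nonneg _) (Real.sqrt_nonneg _) (Real.sqrt_nonneg _) (Real.sqrt_nonneg _)
    (by rw [hx, hz]; ring) (by rw [hy, hw]; ring) (by rw [hx, hy]; linarith)
  rw [hx, hy] at main
  rw [h1, h2]
  linarith

lemma sqrt_prod_eq {n : ℕ} (c : Fin n → ℝ) (hc : ∀ j, 0 ≤ c j) :
    Real.sqrt (∏ j, c j) = ∏ j, Real.sqrt (c j) := by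
  have h2 : (∏ j, Real.sqrt (c j)) ^ 2 = ∏ j, c j := by
    rw [← Finset.prod_pow]
    exact Finset.prod_congr rfl fun j _ => Real.sq_sqrt (hc j)
  rw [← h2, Real.sqrt_sq (Finset.prod_nonneg fun j _ => Real.sqrt_nonneg _)]

lemma sum_prod_swap {n : ℕ} (h : Fin n → Bool → ℝ) :
    (∑ s : Fin n → Bool, ∏ j, h j (s j)) = ∏ j, (h j true + h j false) := by
  have := Finset.prod_univ_sum (fun _ : Fin n => (Finset.univ : Finset Bool)) h
  rw [Fintype.piFinset_univ] at this
  rw [← this]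
  exact Finset.prod_congr rfl fun j _ => by simp [Fintype.sum_bool]

/-- Trace distance between the Bernoulli product distributions is at least
1 - exp(-M/2), where M = ∑ (λ_j - ν)². -/
theorem tv_dist_lower_bound (L : ℕ) (ν : ℝ) (hν : 0 ≤ ν) (lam : Fin L → ℝ)
    (hlam0 : ∀ j, 0 ≤ lam j) (hlam1 : ∀ j, lam j + ν ≤ 1) :
    (1 / 2 : ℝ) * ∑ s : Fin L → Bool,
        |(∏ j, if s j = true then lam j else 1 - lam j)
          - ∏ j, if s j = true then ν else 1 - ν|
      ≥ 1 - Real.exp (-(1 / 2) * ∑ j, (lam j - ν) ^ 2) := by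
  set p : (Fin L → Bool) → ℝ := fun s => ∏ j, if s j = true then lam j else 1 - lam j with hp
  set q : (Fin L → Bool) → ℝ := fun s => ∏ j, if s j = true then ν else 1 - ν with hq
  have hfac0 : ∀ (s : Fin L → Bool) j, 0 ≤ (if s j = true then lam j else 1 - lam j) := by
    intro s j; by_cases h : s j = true <;> simp [h, hlam0 j]
    linarith [hlam1 j, hν]
  have hgac0 : ∀ (s : Fin L → Bool) j, 0 ≤ (if s j = true then ν else 1 - ν) := by
    intro s j; by_cases h : s j = true <;> simp [h, hν]
    linarith [hlam1 j, hlam0 j]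
  have hp0 : ∀ s, 0 ≤ p s := fun s => Finset.prod_nonneg fun j _ => hfac0 s j
  have hq0 : ∀ s, 0 ≤ q s := fun s => Finset.prod_nonneg fun j _ => hgac0 s j
  -- both sum to 1
  have hp1 : ∑ s, p s = 1 := by
    rw [hp]
    rw [sum_prod_swap (fun j b => if b = true then lam j else 1 - lam j)]
    simp
  have hq1 : ∑ s, q s = 1 := by
    rw [hq]
    rw [sum_prod_swap (fun j b => if b = true then ν else 1 - ν)]
    simp
  -- min ≤ sqrt
  have hmin : ∀ s, min (p s) (q s) ≤ Real.sqrt (p s * q s) := by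
    intro s
    have h0 : 0 ≤ min (p s) (q s) := le_min (hp0 s) (hq0 s)
    rw [Real.le_sqrt h0 (mul_nonneg (hp0 s) (hq0 s))]
    rcases le_total (p s) (q s) with h | h
    · rw [min_eq_left h, sq]
      exact mul_le_mul_of_nonneg_left h (hp0 s)
    · rw [min_eq_right h, sq]
      exact mul_le_mul_of_nonneg_right h (hq0 s)
  -- sum of sqrt(pq) = product of per-site Bhattacharyya coefficients
  have hsqrt : ∑ s, Real.sqrt (p s * q s)
      = ∏ j, (Real.sqrt (lam j * ν) + Real.sqrt ((1 - lam j) * (1 - ν))) := by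
    have step : ∀ s, Real.sqrt (p s * q s)
        = ∏ j, Real.sqrt ((if s j = true then lam j else 1 - lam j)
            * (if s j = true then ν else 1 - ν)) := by
      intro s
      rw [hp, hq, ← Finset.prod_mul_distrib]
      exact sqrt_prod_eq _ fun j => mul_nonneg (hfac0 s j) (hgac0 s j)
    rw [Finset.sum_congr rfl fun s _ => step s]
    rw [sum_prod_swap (fun j b => Real.sqrt ((if b = true then lam j else 1 - lam j)
        * (if b = true then ν else 1 - ν)))]
    simp
  -- Bhattacharyya bound
  have hBC : ∑ s, Real.sqrt (p s * q s) ≤ Real.exp (-(1 / 2) * ∑ j, (lam j - ν) ^ 2) := by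
    rw [hsqrt]
    have h1 : ∀ j ∈ Finset.univ, Real.sqrt (lam j * ν) + Real.sqrt ((1 - lam j) * (1 - ν))
        ≤ Real.exp (-(lam j - ν) ^ 2 / 2) :=
      fun j _ => factor_le (lam j) ν (hlam0 j) hν (hlam1 j)
    calc ∏ j, (Real.sqrt (lam j * ν) + Real.sqrt ((1 - lam j) * (1 - ν)))
        ≤ ∏ j, Real.exp (-(lam j - ν) ^ 2 / 2) :=
          Finset.prod_le_prod (fun j _ => add_nonneg (Real.sqrt_nonneg _) (Real.sqrt_nonneg _)) h1
      _ = Real.exp (∑ j, -(lam j - ν) ^ 2 / 2) := (Real.exp_sum _ _).symm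
      _ = Real.exp (-(1 / 2) * ∑ j, (lam j - ν) ^ 2) := by
          congr 1
          rw [Finset.mul_sum]
          exact Finset.sum_congr rfl fun j _ => by ring
  -- |p - q| = p + q - 2 min
  have habs : ∀ s, |p s - q s| = p s + q s - 2 * min (p s) (q s) := by
    intro s
    rcases le_total (p s) (q s) with h | h
    · rw [abs_of_nonpos (by linarith), min_eq_left h]; ring
    · rw [abs_of_nonneg (by linarith), min_eq_right h]; ring
  rw [Finset.sum_congr rfl fun s _ => habs s]
  rw [Finset.sum_sub_distrib, Finset.sum_add_distrib, hp1, hq1, ← Finset.mul_sum]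
  have hminsum : ∑ s, min (p s) (q s) ≤ Real.exp (-(1 / 2) * ∑ j, (lam j - ν) ^ 2) :=
    le_trans (Finset.sum_le_sum fun s _ => hmin s) hBC
  linarith
end
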